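/- Let n ≥ 1, p ∈ (1,∞), let q, d ∈ ℝⁿ with q ≠ 0, write q̂ = q/|q|, and let X ∈ Sⁿ be decomposed as X = X⁺ − X⁻ with X⁺, X⁻ positive semidefinite and X⁺X⁻ = 0. If Tr(X) + (p − 2)⟨X q̂, q̂⟩ + (log|q|)·⟨d, q⟩ ≥ 0, then max{1, p−1}·Tr(X⁺) − min{1, p−1}·Tr(X⁻) + |d|·|q|·|log|q|| ≥ 0. -/

import Mathlib

open Matrix

noncomputable section

lemma quad_nonneg_and_le {n : ℕ} {A : Matrix (Fin n) (Fin n) ℝ} (hA : A.PosSemidef)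
    (v : Fin n → ℝ) :
    0 ≤ ∑ i, ∑ j, A i j * v i * v j ∧
      ∑ i, ∑ j, A i j * v i * v j ≤ A.trace * ∑ i, v i ^ 2 := by
  obtain ⟨B, rfl⟩ : ∃ B : Matrix (Fin n) (Fin n) ℝ, A = Bᴴ * B := by
    open scoped MatrixOrder in exact CStarAlgebra.nonneg_iff_eq_star_mul_self.mp hA.nonneg
  have swap3 : ∀ f : Fin n → Fin n → Fin n → ℝ,
      ∑ k, ∑ i, ∑ j, f k i j = ∑ i, ∑ j, ∑ k, f k i j := by
    intro f
    rw [Finset.sum_comm]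
    exact Finset.sum_congr rfl fun i _ => Finset.sum_comm
  have key : ∑ i, ∑ j, (Bᴴ * B) i j * v i * v j = ∑ k, (∑ i, B k i * v i) ^ 2 := by
    have e : ∀ i j, (Bᴴ * B) i j * v i * v j = ∑ k, (B k i * v i) * (B k j * v j) := by
      intro i j
      simp only [Matrix.mul_apply, Matrix.conjTranspose_apply, star_trivial,
        Finset.sum_mul]
      exact Finset.sum_congr rfl fun k _ => by ring
    simp_rw [e, pow_two, Finset.sum_mul_sum]
    exact (swap3 _).symm
  have tr : (Bᴴ * B).trace = ∑ k, ∑ i, B k i ^ 2 := by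
    simp only [Matrix.trace, Matrix.diag, Matrix.mul_apply,
      Matrix.conjTranspose_apply, star_trivial, ← pow_two]
    exact Finset.sum_comm
  constructor
  · rw [key]; positivity
  · rw [key, tr, Finset.sum_mul]
    exact Finset.sum_le_sum fun k _ => Finset.sum_mul_sq_le_sq_mul_sq _ _ _

/-- The strong-form variable exponent p-Laplace inequality implies the
Pucci-type structure inequality: here `X` plays the role of `D²u`, `q` of `Du`, `d` of `Dp`. -/
theorem pLaplace_implies_Pucci_structure {n : ℕ} (hn : 1 ≤ n) (p : ℝ) (hp : 1 < p)
    (q d : EuclideanSpace ℝ (Fin n)) (hq : q ≠ 0)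
    (X Xp Xm : Matrix (Fin n) (Fin n) ℝ)
    (hXsymm : X.IsSymm)
    (hX : X = Xp - Xm)
    (hXp : Xp.PosSemidef) (hXm : Xm.PosSemidef) (hortho : Xp * Xm = 0)
    (h : 0 ≤ X.trace
        + (p - 2) * (∑ i, ∑ j, X i j * (q i / ‖q‖) * (q j / ‖q‖))
        + Real.log ‖q‖ * (∑ i, d i * q i)) :
    0 ≤ max 1 (p - 1) * Xp.trace - min 1 (p - 1) * Xm.trace
        + ‖d‖ * ‖q‖ * |Real.log ‖q‖| := by
  have hq' : ‖q‖ ≠ 0 := norm_ne_zero_iff.mpr hq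
  -- unit vector
  have hnq : ∑ i, q i ^ 2 = ‖q‖ ^ 2 := by
    rw [EuclideanSpace.norm_eq, Real.sq_sqrt (by positivity)]
    simp [Real.norm_eq_abs, sq_abs]
  have hv : ∑ i, (q i / ‖q‖) ^ 2 = 1 := by
    simp_rw [div_pow, ← Finset.sum_div, hnq]
    field_simp
  obtain ⟨hQp0, hQp1⟩ := quad_nonneg_and_le hXp (fun i => q i / ‖q‖)
  obtain ⟨hQm0, hQm1⟩ := quad_nonneg_and_le hXm (fun i => q i / ‖q‖)
  beta_reduce at hQp0 hQp1 hQm0 hQm1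
  rw [hv, mul_one] at hQp1 hQm1
  -- split quadratic form and trace
  have hsplit : ∑ i, ∑ j, X i j * (q i / ‖q‖) * (q j / ‖q‖)
      = (∑ i, ∑ j, Xp i j * (q i / ‖q‖) * (q j / ‖q‖))
        - ∑ i, ∑ j, Xm i j * (q i / ‖q‖) * (q j / ‖q‖) := by
    rw [hX]
    simp [Matrix.sub_apply, sub_mul, Finset.sum_sub_distrib]
  rw [hsplit, hX, Matrix.trace_sub] at h
  -- Cauchy-Schwarz for the log term
  have hcs : |∑ i, d i * q i| ≤ ‖d‖ * ‖q‖ := by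
    have h1 : (inner ℝ d q : ℝ) = ∑ i, d i * q i := by
      simp [PiLp.inner_apply, RCLike.inner_apply, conj_trivial, mul_comm]
    rw [← h1]; exact abs_real_inner_le_norm d q
  have hlog : Real.log ‖q‖ * (∑ i, d i * q i) ≤ ‖d‖ * ‖q‖ * |Real.log ‖q‖| := by
    calc Real.log ‖q‖ * (∑ i, d i * q i)
        ≤ |Real.log ‖q‖ * (∑ i, d i * q i)| := le_abs_self _
      _ = |Real.log ‖q‖| * |∑ i, d i * q i| := abs_mul _ _
      _ ≤ |Real.log ‖q‖| * (‖d‖ * ‖q‖) :=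
          mul_le_mul_of_nonneg_left hcs (abs_nonneg _)
      _ = ‖d‖ * ‖q‖ * |Real.log ‖q‖| := by ring
  rcases le_or_gt 2 p with hp2 | hp2
  · rw [max_eq_right (by linarith), min_eq_left (by linarith)]
    nlinarith [mul_nonneg (by linarith : (0:ℝ) ≤ p - 2) hQm0,
      mul_le_mul_of_nonneg_left hQp1 (by linarith : (0:ℝ) ≤ p - 2)]
  · rw [max_eq_left (by linarith), min_eq_right (by linarith)]
    nlinarith [mul_nonneg (by linarith : (0:ℝ) ≤ 2 - p) hQp0,
      mul_le_mul_of_nonneg_left hQm1 (by linarith : (0:ℝ) ≤ 2 - p)]
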